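/- Let U ⊆ ℝ³ be open with coordinates (x⁰, x¹, x²) = (t, x₁, x₂), let η, v¹, v² be C¹ functions on U with η > 0, set h = η², and let g be the acoustical metric field g₀₀ = −η² + (v¹)² + (v²)², g₀ᵢ = gᵢ₀ = −v^i, g_{ij} = δ_{ij}, with pointwise inverse g^{αβ}, Christoffel symbols Γ^γ_{αβ} = ½ g^{γδ}(∂_α g_{βδ} + ∂_β g_{αδ} − ∂_δ g_{αβ}), and wave operator □_g f = g^{αβ} ∂_α ∂_β f − g^{αβ} Γ^γ_{αβ} ∂_γ f. Then for every C² function f on U: □_g f = −η^{−2} B²f + Δf − η^{−2} (div v) Bf + ½ η^{−2} g^{αβ} ∂_α f ∂_β h + η^{−4} (Bf)(Bh), where B = ∂_t + v¹∂₁ + v²∂₂, Δ = ∂₁² + ∂₂², and div v = ∂₁v¹ + ∂₂v². -/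

import Mathlib

/-- Partial derivative in the `i`-th coordinate direction of spacetime
`ℝ³ ≃ (Fin 3 → ℝ)`, coordinates `(x⁰, x¹, x²) = (t, x₁, x₂)`. -/
noncomputable def pd (i : Fin 3) (f : (Fin 3 → ℝ) → ℝ) (x : Fin 3 → ℝ) : ℝ :=
  fderiv ℝ f x (Pi.single i 1)

/-- Material derivative `B = ∂ₜ + v¹∂₁ + v²∂₂`. -/
noncomputable def matD (v1 v2 f : (Fin 3 → ℝ) → ℝ) (x : Fin 3 → ℝ) : ℝ :=
  pd 0 f x + v1 x * pd 1 f x + v2 x * pd 2 f x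

/-- The acoustical metric field `g₀₀ = −η² + |v|²`, `g₀ᵢ = gᵢ₀ = −vⁱ`, `g_{ij} = δ_{ij}`. -/
noncomputable def gMat (η v1 v2 : (Fin 3 → ℝ) → ℝ) (x : Fin 3 → ℝ) :
    Matrix (Fin 3) (Fin 3) ℝ :=
  !![-(η x) ^ 2 + (v1 x) ^ 2 + (v2 x) ^ 2, -(v1 x), -(v2 x);
     -(v1 x), 1, 0;
     -(v2 x), 0, 1]

/-- Pointwise inverse `g^{αβ}` of the acoustical metric. -/
noncomputable def gInv (η v1 v2 : (Fin 3 → ℝ) → ℝ) (x : Fin 3 → ℝ) :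
    Matrix (Fin 3) (Fin 3) ℝ :=
  (gMat η v1 v2 x)⁻¹

/-- Christoffel symbols of the first kind
`Γ_{αβγ} = ½(∂_α g_{βγ} + ∂_β g_{αγ} − ∂_γ g_{αβ})` of the acoustical metric. -/
noncomputable def Γfst (η v1 v2 : (Fin 3 → ℝ) → ℝ) (α β γ : Fin 3) (x : Fin 3 → ℝ) : ℝ :=
  (pd α (fun y => gMat η v1 v2 y β γ) x + pd β (fun y => gMat η v1 v2 y α γ) x
    - pd γ (fun y => gMat η v1 v2 y α β) x) / 2

/-- Christoffel symbols of the second kind `Γ^γ_{αβ} = g^{γδ} Γ_{αβδ}`. -/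
noncomputable def Γsnd (η v1 v2 : (Fin 3 → ℝ) → ℝ) (γ α β : Fin 3) (x : Fin 3 → ℝ) : ℝ :=
  ∑ d : Fin 3, gInv η v1 v2 x γ d * Γfst η v1 v2 α β d x

/-- Wave operator `□_g f = g^{αβ} ∂_α ∂_β f − g^{αβ} Γ^γ_{αβ} ∂_γ f` of the acoustical
metric. -/
noncomputable def box (η v1 v2 f : (Fin 3 → ℝ) → ℝ) (x : Fin 3 → ℝ) : ℝ :=
  (∑ α : Fin 3, ∑ β : Fin 3, gInv η v1 v2 x α β * pd α (pd β f) x)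
    - ∑ α : Fin 3, ∑ β : Fin 3, ∑ γ : Fin 3,
        gInv η v1 v2 x α β * Γsnd η v1 v2 γ α β x * pd γ f x


section helpers
variable {f g : (Fin 3 → ℝ) → ℝ} {x : Fin 3 → ℝ} {i : Fin 3} {c : ℝ}

lemma pd_const : pd i (fun _ => c) x = 0 := by simp [pd]

lemma pd_add (hf : DifferentiableAt ℝ f x) (hg : DifferentiableAt ℝ g x) :
    pd i (fun y => f y + g y) x = pd i f x + pd i g x := by
  simp [pd, fderiv_fun_add hf hg]

lemma pd_neg : pd i (fun y => -f y) x = -pd i f x := by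
  simp [pd, fderiv_neg]

lemma pd_mul (hf : DifferentiableAt ℝ f x) (hg : DifferentiableAt ℝ g x) :
    pd i (fun y => f y * g y) x = f x * pd i g x + pd i f x * g x := by
  simp [pd, fderiv_fun_mul hf hg]; ring

lemma pd_sq (hf : DifferentiableAt ℝ f x) :
    pd i (fun y => f y ^ 2) x = 2 * f x * pd i f x := by
  have h : (fun y => f y ^ 2) = fun y => f y * f y := by funext y; ring
  rw [h, pd_mul hf hf]; ring
end helpers

set_option maxHeartbeats 4000000 in
/-- Decomposition of the acoustical wave operator: for any `C²` function `f`,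
`□_g f = −η⁻² B²f + Δf − η⁻² (div v) Bf + ½ η⁻² g^{αβ} ∂_α f ∂_β h + η⁻⁴ (Bf)(Bh)`,
with `h = η²`, `B = ∂ₜ + v¹∂₁ + v²∂₂`, `Δ = ∂₁² + ∂₂²`, `div v = ∂₁v¹ + ∂₂v²`. -/
theorem acoustical_wave_operator_decomposition
    (U : Set (Fin 3 → ℝ)) (hU : IsOpen U)
    (η v1 v2 : (Fin 3 → ℝ) → ℝ)
    (hη : ContDiffOn ℝ 1 η U) (hv1 : ContDiffOn ℝ 1 v1 U) (hv2 : ContDiffOn ℝ 1 v2 U)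
    (hpos : ∀ x ∈ U, 0 < η x) :
    ∀ f : (Fin 3 → ℝ) → ℝ, ContDiffOn ℝ 2 f U → ∀ x ∈ U,
      box η v1 v2 f x
        = -(η x ^ 2)⁻¹ * matD v1 v2 (matD v1 v2 f) x
          + (pd 1 (pd 1 f) x + pd 2 (pd 2 f) x)
          - (η x ^ 2)⁻¹ * (pd 1 v1 x + pd 2 v2 x) * matD v1 v2 f x
          + (1 / 2) * (η x ^ 2)⁻¹
              * ∑ α : Fin 3, ∑ β : Fin 3,
                  gInv η v1 v2 x α β * pd α f x * pd β (fun y => η y ^ 2) x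
          + (η x ^ 4)⁻¹ * matD v1 v2 f x * matD v1 v2 (fun y => η y ^ 2) x := by
  intro f hf x hx
  have hxU : U ∈ nhds x := hU.mem_nhds hx
  have hne : η x ≠ 0 := ne_of_gt (hpos x hx)
  have hηd : DifferentiableAt ℝ η x := (hη.contDiffAt hxU).differentiableAt (by norm_num)
  have hv1d : DifferentiableAt ℝ v1 x := (hv1.contDiffAt hxU).differentiableAt (by norm_num)
  have hv2d : DifferentiableAt ℝ v2 x := (hv2.contDiffAt hxU).differentiableAt (by norm_num)
  have hfC : ContDiffAt ℝ 2 f x := hf.contDiffAt hxU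
  have hf' : ContDiffAt ℝ 1 (fderiv ℝ f) x := hfC.fderiv_right (by norm_num)
  have hf'd : DifferentiableAt ℝ (fderiv ℝ f) x := hf'.differentiableAt (by norm_num)
  have hpdf : ∀ j, DifferentiableAt ℝ (pd j f) x := fun j =>
    hf'd.clm_apply (differentiableAt_const _)
  have hsec : ∀ α β : Fin 3, pd α (pd β f) x
      = fderiv ℝ (fderiv ℝ f) x (Pi.single α 1) (Pi.single β 1) := by
    intro α β
    show fderiv ℝ (fun y => (fderiv ℝ f y) (Pi.single β 1)) x (Pi.single α 1) = _
    rw [fderiv_clm_apply hf'd (differentiableAt_const _)]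
    simp
  have hsymm : ∀ α β, pd α (pd β f) x = pd β (pd α f) x := by
    intro α β
    rw [hsec, hsec]
    exact (hfC.isSymmSndFDerivAt (by norm_num)) _ _
  -- inverse metric
  have hg : gInv η v1 v2 x = (η x ^ 2)⁻¹ •
      !![-1, -(v1 x), -(v2 x);
         -(v1 x), η x ^ 2 - v1 x ^ 2, -(v1 x * v2 x);
         -(v2 x), -(v1 x * v2 x), η x ^ 2 - v2 x ^ 2] := by
    apply Matrix.inv_eq_right_inv
    ext i j
    fin_cases i <;> fin_cases j <;>
      simp [gMat, Matrix.mul_apply, Fin.sum_univ_three] <;> field_simp <;> ring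
  have g00 : gInv η v1 v2 x 0 0 = (η x ^ 2)⁻¹ * (-1) := by rw [hg]; simp
  have g01 : gInv η v1 v2 x 0 1 = (η x ^ 2)⁻¹ * (-(v1 x)) := by rw [hg]; simp
  have g02 : gInv η v1 v2 x 0 2 = (η x ^ 2)⁻¹ * (-(v2 x)) := by rw [hg]; simp
  have g10 : gInv η v1 v2 x 1 0 = (η x ^ 2)⁻¹ * (-(v1 x)) := by rw [hg]; simp
  have g11 : gInv η v1 v2 x 1 1 = (η x ^ 2)⁻¹ * (η x ^ 2 - v1 x ^ 2) := by rw [hg]; simp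
  have g12 : gInv η v1 v2 x 1 2 = (η x ^ 2)⁻¹ * (-(v1 x * v2 x)) := by rw [hg]; simp
  have g20 : gInv η v1 v2 x 2 0 = (η x ^ 2)⁻¹ * (-(v2 x)) := by rw [hg]; simp
  have g21 : gInv η v1 v2 x 2 1 = (η x ^ 2)⁻¹ * (-(v1 x * v2 x)) := by rw [hg]; simp
  have g22 : gInv η v1 v2 x 2 2 = (η x ^ 2)⁻¹ * (η x ^ 2 - v2 x ^ 2) := by rw [hg]; simp
  -- metric entry functions
  have e00 : (fun y => gMat η v1 v2 y 0 0) = fun y => -η y ^ 2 + v1 y ^ 2 + v2 y ^ 2 := by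
    funext y; simp [gMat]
  have e01 : (fun y => gMat η v1 v2 y 0 1) = fun y => -v1 y := by funext y; simp [gMat]
  have e02 : (fun y => gMat η v1 v2 y 0 2) = fun y => -v2 y := by funext y; simp [gMat]
  have e10 : (fun y => gMat η v1 v2 y 1 0) = fun y => -v1 y := by funext y; simp [gMat]
  have e11 : (fun y => gMat η v1 v2 y 1 1) = fun _ => (1:ℝ) := by funext y; simp [gMat]
  have e12 : (fun y => gMat η v1 v2 y 1 2) = fun _ => (0:ℝ) := by funext y; simp [gMat]
  have e20 : (fun y => gMat η v1 v2 y 2 0) = fun y => -v2 y := by funext y; simp [gMat]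
  have e21 : (fun y => gMat η v1 v2 y 2 1) = fun _ => (0:ℝ) := by funext y; simp [gMat]
  have e22 : (fun y => gMat η v1 v2 y 2 2) = fun _ => (1:ℝ) := by funext y; simp [gMat]
  -- derivatives of metric entries
  have pdη2 : ∀ i, pd i (fun y => η y ^ 2) x = 2 * η x * pd i η x := fun i => pd_sq hηd
  have p00 : ∀ i, pd i (fun y => -η y ^ 2 + v1 y ^ 2 + v2 y ^ 2) x
      = -(2 * η x * pd i η x) + 2 * v1 x * pd i v1 x + 2 * v2 x * pd i v2 x := by
    intro i
    rw [pd_add (((hηd.fun_pow 2).fun_neg).fun_add (hv1d.fun_pow 2)) (hv2d.fun_pow 2),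
        pd_add ((hηd.fun_pow 2).fun_neg) (hv1d.fun_pow 2),
        pd_neg (f := fun y => η y ^ 2), pd_sq hηd, pd_sq hv1d, pd_sq hv2d]
  have pn1 : ∀ i, pd i (fun y => -v1 y) x = -pd i v1 x := fun i => pd_neg
  have pn2 : ∀ i, pd i (fun y => -v2 y) x = -pd i v2 x := fun i => pd_neg
  -- material derivative as explicit function
  have hmat : matD v1 v2 f = fun y => pd 0 f y + v1 y * pd 1 f y + v2 y * pd 2 f y := rfl
  have pB : ∀ i, pd i (fun y => pd 0 f y + v1 y * pd 1 f y + v2 y * pd 2 f y) x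
      = pd i (pd 0 f) x + (v1 x * pd i (pd 1 f) x + pd i v1 x * pd 1 f x)
        + (v2 x * pd i (pd 2 f) x + pd i v2 x * pd 2 f x) := by
    intro i
    rw [pd_add ((hpdf 0).fun_add (hv1d.fun_mul (hpdf 1))) (hv2d.fun_mul (hpdf 2)),
        pd_add (hpdf 0) (hv1d.fun_mul (hpdf 1)),
        pd_mul hv1d (hpdf 1), pd_mul hv2d (hpdf 2)]
  simp only [box, Γsnd, Γfst, matD, Fin.sum_univ_three, hmat]
  simp only [e00, e01, e02, e10, e11, e12, e20, e21, e22]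
  simp only [g00, g01, g02, g10, g11, g12, g20, g21, g22]
  simp only [p00, pn1, pn2, pd_const, pdη2, pB]
  simp only [hsymm 1 0, hsymm 2 0, hsymm 2 1]
  field_simp
  ring
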